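/- With the cyclic setup in the context (intervals I_{α₁},…,I_{α_k} ⊆ C_k permuted cyclically by σ, and p jump points added into each, with 𝒜 and 𝒜_S invariant under σ and σ⁻¹), the set C_k decomposes as C_k = ⋃_{l=1}^{p+1} C̃_{k·l}. -/

import Mathlib

open scoped Classical

noncomputable section

namespace PaperTRS

/-- The algebra of complex valued functions constant on each set of the family `P`. -/
def partAlg {X J : Type*} (P : J → Set X) : Subalgebra ℂ (X → ℂ) where
  carrier := {h | ∀ i, ∀ x ∈ P i, ∀ y ∈ P i, h x = h y}
  mul_mem' := by
    intro a b ha hb i x hx y hy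
    simp only [Pi.mul_apply, ha i x hx y hy, hb i x hx y hy]
  add_mem' := by
    intro a b ha hb i x hx y hy
    simp only [Pi.add_apply, ha i x hx y hy, hb i x hx y hy]
  algebraMap_mem' := by intro r i x hx y hy; rfl

/-- Piecewise constant functions on `ℝ` whose jumps all lie in the set `T`. -/
def pcAlgOn (T : Set ℝ) : Subalgebra ℂ (ℝ → ℂ) where
  carrier := {h | ∀ x y : ℝ, x ∉ T → y ∉ T →
    (∀ u ∈ T, u ∉ Set.Icc (min x y) (max x y)) → h x = h y}
  mul_mem' := by
    intro a b ha hb x y hx hy hxy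
    simp only [Pi.mul_apply, ha x y hx hy hxy, hb x y hx hy hxy]
  add_mem' := by
    intro a b ha hb x y hx hy hxy
    simp only [Pi.add_apply, ha x y hx hy hxy, hb x y hx hy hxy]
  algebraMap_mem' := by intro r x y _ _ _; rfl

/-- Invariance of an algebra of functions under a self-map of `X`. -/
def AlgInvariant {X : Type*} (A : Subalgebra ℂ (X → ℂ)) (σ : X → X) : Prop :=
  ∀ h ∈ A, (h ∘ σ) ∈ A

/-- `Sep A σ n = {x | ∃ h ∈ A, h x ≠ σ̃ⁿ(h) x}`, where `σ̃ⁿ(h) = h ∘ σ⁻ⁿ`. -/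
def Sep {X : Type*} (A : Subalgebra ℂ (X → ℂ)) (σ : Equiv.Perm X) (n : ℤ) : Set X :=
  {x | ∃ h ∈ A, h x ≠ h ((σ ^ n)⁻¹ x)}

/-- Twisted convolution product on the crossed product `⋊ ℤ`:
`(fₙ δⁿ) * (gₘ δᵐ) = fₙ · σ̃ⁿ(gₘ) · δ^{n+m}` extended bilinearly. -/
def cmul {X : Type*} (σ : Equiv.Perm X) (f g : ℤ →₀ (X → ℂ)) : ℤ →₀ (X → ℂ) :=
  f.sum fun n a => g.sum fun m b =>
    Finsupp.single (n + m) (fun x => a x * b ((σ ^ n)⁻¹ x))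

/-- Membership of an element `Σ fₙ δⁿ` in the crossed product of the algebra `B` with `ℤ`. -/
def InCrossed {X : Type*} (B : Subalgebra ℂ (X → ℂ)) (f : ℤ →₀ (X → ℂ)) : Prop :=
  ∀ n, f n ∈ B

/-- The commutant of `A` inside the crossed product `B ⋊ ℤ` (where `A ⊆ B`). -/
def commutant {X : Type*} (A B : Subalgebra ℂ (X → ℂ)) (σ : Equiv.Perm X) :
    Set (ℤ →₀ (X → ℂ)) :=
  {f | InCrossed B f ∧
    ∀ a ∈ A, cmul σ f (Finsupp.single 0 a) = cmul σ (Finsupp.single 0 a) f}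

/-- The jump points `t₁ < ⋯ < t_N` extended by `t₀ = -∞` and `t_{N+1} = +∞`. -/
def tE (N : ℕ) (t : Fin N → ℝ) (i : ℕ) : EReal :=
  if h : 1 ≤ i ∧ i ≤ N then ((t ⟨i - 1, by omega⟩ : ℝ) : EReal)
  else if i = 0 then ⊥ else ⊤

/-- The open interval `I_i = (t_i, t_{i+1})` for `0 ≤ i ≤ N`. -/
def openPiece (N : ℕ) (t : Fin N → ℝ) (i : ℕ) : Set ℝ :=
  {x : ℝ | tE N t i < (x : EReal) ∧ (x : EReal) < tE N t (i + 1)}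

/-- The sets of the partition of `ℝ` determined by the jump points: the open
intervals `I_0, …, I_N` together with the singletons `{t_i}`. -/
def pieces (N : ℕ) (t : Fin N → ℝ) : Set (Set ℝ) :=
  {P | (∃ i : ℕ, i ≤ N ∧ P = openPiece N t i) ∨ (∃ i : Fin N, P = {t i})}

/-- `C_k`: points `x` such that `k` is the smallest positive integer with `x` and
`σᵏ(x)` in one common set of the partition. -/
def Ck (N : ℕ) (t : Fin N → ℝ) (σ : Equiv.Perm ℝ) (k : ℕ) : Set ℝ :=
  {x | IsLeast {j : ℕ | 0 < j ∧ ∃ P ∈ pieces N t, x ∈ P ∧ (σ ^ j) x ∈ P} k}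

end PaperTRS
namespace PaperTRS

/-- With `p` points `s i 0 < ⋯ < s i (p-1)` added in the interval `I_{α i}`, the `j`-th
open subinterval of the refined partition of `I_{α i}`, for `j = 0, …, p`. -/
def subPiece (N : ℕ) (t : Fin N → ℝ) {k p : ℕ} (α : Fin k → ℕ)
    (s : Fin k → Fin p → ℝ) (i : Fin k) (j : Fin (p + 1)) : Set ℝ :=
  {x : ℝ |
    (if hj : (j : ℕ) = 0 then tE N t (α i)
      else ((s i ⟨(j : ℕ) - 1, by have := j.isLt; omega⟩ : ℝ) : EReal)) < (x : EReal) ∧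
    (x : EReal) <
      (if hj : (j : ℕ) = p then tE N t (α i + 1)
        else ((s i ⟨(j : ℕ), by have := j.isLt; omega⟩ : ℝ) : EReal))}

/-- The sets of the refined partition of the union of the intervals `I_{α i}`: the open
subintervals determined by the added jump points together with the singleton jump points. -/
def cyclePieces (N : ℕ) (t : Fin N → ℝ) {k p : ℕ} (α : Fin k → ℕ)
    (s : Fin k → Fin p → ℝ) : Set (Set ℝ) :=
  {P | (∃ i j, P = subPiece N t α s i j) ∨ (∃ i j, P = ({s i j} : Set ℝ))}

/-- `C̃_r`: points `x` of `⋃ᵢ I_{α i}` such that `r` is the smallest positive integer with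
`x` and `σʳ(x)` in one common set of the refined partition. -/
def Ctil (N : ℕ) (t : Fin N → ℝ) (σ : Equiv.Perm ℝ) {k p : ℕ} (α : Fin k → ℕ)
    (s : Fin k → Fin p → ℝ) (r : ℕ) : Set ℝ :=
  {x | x ∈ ⋃ i, openPiece N t (α i) ∧
    IsLeast {j : ℕ | 0 < j ∧ ∃ P ∈ cyclePieces N t α s, x ∈ P ∧ (σ ^ j) x ∈ P} r}

/-- The cyclic setup: `k` pairwise distinct open intervals `I_{α 0}, …, I_{α (k-1)}` of the
original partition, contained in `C_k` and permuted cyclically by `σ`, with `p` jump points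
`s i 0 < ⋯ < s i (p-1)` added into each of them, and both the original algebra `𝒜` and the
refined algebra `𝒜_S` invariant under `σ` and `σ⁻¹`. -/
def CyclicSetup (N : ℕ) (t : Fin N → ℝ) (σ : Equiv.Perm ℝ) {k p : ℕ} (α : Fin k → ℕ)
    (s : Fin k → Fin p → ℝ) : Prop :=
  0 < k ∧ (∀ i, α i ≤ N) ∧ Function.Injective α ∧
  (∀ i j, s i j ∈ openPiece N t (α i)) ∧ (∀ i, StrictMono (s i)) ∧
  (∀ i : Fin k, ∃ i' : Fin k, ((i' : ℕ) = ((i : ℕ) + 1) % k) ∧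
    σ '' openPiece N t (α i) = openPiece N t (α i')) ∧
  (∀ i, openPiece N t (α i) ⊆ Ck N t σ k) ∧
  AlgInvariant (pcAlgOn (Set.range t)) σ ∧
  AlgInvariant (pcAlgOn (Set.range t)) σ.symm ∧
  AlgInvariant (pcAlgOn (Set.range t ∪ ⋃ i, Set.range (s i))) σ ∧
  AlgInvariant (pcAlgOn (Set.range t ∪ ⋃ i, Set.range (s i))) σ.symm

/-- `C_k` for the partition `P` of a general set `X`. -/
def CkGen {X ι : Type*} (P : ι → Set X) (σ : Equiv.Perm X) (k : ℕ) : Set X :=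
  {x | IsLeast {j : ℕ | 0 < j ∧ ∃ i, x ∈ P i ∧ (σ ^ j) x ∈ P i} k}

/-- `C̃_r` relative to a family `Q` of refined pieces inside the subset `base` of `X`. -/
def CtilGen {X ι : Type*} (σ : Equiv.Perm X) (Q : ι → Set X) (base : Set X) (r : ℕ) :
    Set X :=
  {x | x ∈ base ∧ IsLeast {j : ℕ | 0 < j ∧ ∃ i, x ∈ Q i ∧ (σ ^ j) x ∈ Q i} r}

/-- `C_∞`: points that never return to the partition set they lie in. -/
def Cinf {X ι : Type*} (P : ι → Set X) (σ : Equiv.Perm X) : Set X :=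
  {x | ∀ k : ℕ, 0 < k → ¬∃ i, x ∈ P i ∧ (σ ^ k) x ∈ P i}

end PaperTRS
namespace PaperTRS


section Statement9Aux

variable {N : ℕ} {t : Fin N → ℝ} {σ : Equiv.Perm ℝ} {k p : ℕ} {α : Fin k → ℕ}
  {s : Fin k → Fin p → ℝ}

/-- The equivalence `x ~ y` iff all functions in `pcAlgOn T` agree on `x` and `y`. -/
def Rel (T : Set ℝ) (x y : ℝ) : Prop := ∀ h ∈ pcAlgOn T, h x = h y

lemma Rel.symm {T : Set ℝ} {x y : ℝ} (h : Rel T x y) : Rel T y x :=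
  fun f hf => (h f hf).symm

lemma indicator_singleton_mem {T : Set ℝ} {c : ℝ} (hc : c ∈ T) :
    (fun z => if z = c then (1:ℂ) else 0) ∈ pcAlgOn T := by
  intro x y hx hy _
  dsimp only
  rw [if_neg (fun h : x = c => hx (h ▸ hc)), if_neg (fun h : y = c => hy (h ▸ hc))]

lemma not_rel_of_singleton {T : Set ℝ} {c y : ℝ} (hc : c ∈ T) (hy : y ≠ c) :
    ¬ Rel T c y := by
  intro hr
  have := hr _ (indicator_singleton_mem hc)
  simp only [if_pos rfl, if_neg hy] at this
  exact one_ne_zero this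

lemma indicator_Ioi_mem {T : Set ℝ} {c : ℝ} (hc : c ∈ T) :
    (fun z => if c < z then (1:ℂ) else 0) ∈ pcAlgOn T := by
  intro x y hx hy hsep
  have h := hsep c hc
  simp only [Set.mem_Icc, not_and, not_le] at h
  dsimp only
  by_cases h1 : c < min x y
  · rw [if_pos (lt_of_lt_of_le h1 (min_le_left x y)),
      if_pos (lt_of_lt_of_le h1 (min_le_right x y))]
  · have h2 : max x y < c := h (not_lt.mp h1)
    rw [if_neg (not_lt.mpr ((le_max_left x y).trans h2.le)),
      if_neg (not_lt.mpr ((le_max_right x y).trans h2.le))]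

lemma not_rel_of_btwn {T : Set ℝ} {c x y : ℝ} (hc : c ∈ T) (hxc : x < c) (hcy : c < y) :
    ¬ Rel T x y := by
  intro hr
  have := hr _ (indicator_Ioi_mem hc)
  simp only [if_neg (not_lt.mpr hxc.le), if_pos hcy] at this
  exact zero_ne_one this

lemma exists_real_btwn_lt (L : EReal) {x : ℝ} (h : L < (x:EReal)) :
    ∃ x' : ℝ, x' ≠ x ∧ L < (x':EReal) ∧ x' < x := by
  induction L with
  | bot => exact ⟨x-1, by norm_num, EReal.bot_lt_coe _, by linarith⟩
  | coe r =>
    have hr : r < x := EReal.coe_lt_coe_iff.mp h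
    have h2 : (r+x)/2 < x := by linarith
    exact ⟨(r+x)/2, ne_of_lt h2, EReal.coe_lt_coe_iff.mpr (by linarith), h2⟩
  | top => simp at h

lemma tE_mono (ht : StrictMono t) : Monotone (tE N t) := by
  intro i j hij
  unfold tE
  by_cases h1 : 1 ≤ i ∧ i ≤ N
  · rw [dif_pos h1]
    by_cases h2 : 1 ≤ j ∧ j ≤ N
    · rw [dif_pos h2]
      exact EReal.coe_le_coe_iff.mpr (ht.monotone (by simp only [Fin.mk_le_mk]; omega))
    · rw [dif_neg h2, if_neg (by omega)]
      exact le_top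
  · rw [dif_neg h1]
    by_cases h0 : i = 0
    · rw [if_pos h0]; exact bot_le
    · rw [if_neg h0, dif_neg (by omega), if_neg (by omega)]

lemma openPiece_disjoint (ht : StrictMono t) {a b : ℕ} (hab : a ≠ b) {x : ℝ}
    (hxa : x ∈ openPiece N t a) (hxb : x ∈ openPiece N t b) : False := by
  rcases hab.lt_or_gt with h | h
  · exact absurd (lt_trans (lt_of_lt_of_le hxa.2 (tE_mono ht (by omega : a+1 ≤ b))) hxb.1)
      (lt_irrefl _)
  · exact absurd (lt_trans (lt_of_lt_of_le hxb.2 (tE_mono ht (by omega : b+1 ≤ a))) hxa.1)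
      (lt_irrefl _)

lemma t_not_mem_openPiece (ht : StrictMono t) (m : Fin N) {a : ℕ} :
    (t m : ℝ) ∉ openPiece N t a := by
  intro hx
  have htE : tE N t ((m:ℕ)+1) = ((t m : ℝ) : EReal) := by
    unfold tE
    rw [dif_pos ⟨by omega, by omega⟩]
    rfl
  rcases le_or_gt ((m:ℕ)+1) a with h | h
  · have h2 : tE N t ((m:ℕ)+1) ≤ tE N t a := tE_mono ht h
    rw [htE] at h2
    exact absurd hx.1 (not_lt.mpr h2)
  · have h2 : tE N t (a+1) ≤ tE N t ((m:ℕ)+1) := tE_mono ht (by omega)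
    rw [htE] at h2
    exact absurd hx.2 (not_lt.mpr h2)

lemma subPiece_subset_openPiece (hs_mem : ∀ i j, s i j ∈ openPiece N t (α i))
    (i : Fin k) (j : Fin (p+1)) :
    subPiece N t α s i j ⊆ openPiece N t (α i) := by
  intro x hx
  obtain ⟨hx1, hx2⟩ := hx
  constructor
  · split_ifs at hx1 with hj
    · exact hx1
    · exact lt_trans (hs_mem i _).1 hx1
  · split_ifs at hx2 with hj
    · exact hx2
    · exact lt_trans hx2 (hs_mem i _).2

lemma s_not_mem_subPiece (hs_mono : ∀ i, StrictMono (s i)) (i : Fin k) (j' : Fin p)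
    (j : Fin (p+1)) : (s i j' : ℝ) ∉ subPiece N t α s i j := by
  intro hx
  obtain ⟨hx1, hx2⟩ := hx
  rcases lt_or_ge (j':ℕ) (j:ℕ) with h | h
  · rw [dif_neg (by omega)] at hx1
    have h1 : s i ⟨(j:ℕ)-1, by have := j.isLt; omega⟩ < s i j' :=
      EReal.coe_lt_coe_iff.mp hx1
    have h2 : s i j' ≤ s i ⟨(j:ℕ)-1, by have := j.isLt; omega⟩ :=
      (hs_mono i).monotone (by simp only [Fin.le_def]; omega)
    exact absurd (lt_of_le_of_lt h2 h1) (lt_irrefl _)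
  · rw [dif_neg (by have := j'.isLt; omega)] at hx2
    have h1 : s i j' < s i ⟨(j:ℕ), by have := j'.isLt; omega⟩ :=
      EReal.coe_lt_coe_iff.mp hx2
    have h2 : s i ⟨(j:ℕ), by have := j'.isLt; omega⟩ ≤ s i j' :=
      (hs_mono i).monotone (by simp only [Fin.le_def]; omega)
    exact absurd (lt_of_le_of_lt h2 h1) (lt_irrefl _)

lemma exists_mem_subPiece (hs_mono : ∀ i, StrictMono (s i)) {x : ℝ} {i : Fin k}
    (hx : x ∈ openPiece N t (α i)) :
    (∃ j : Fin p, x = s i j) ∨ ∃ j : Fin (p+1), x ∈ subPiece N t α s i j := by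
  by_cases hxs : ∃ j : Fin p, x = s i j
  · exact Or.inl hxs
  push_neg at hxs
  right
  classical
  by_cases hFn : (Finset.filter (fun j : Fin p => s i j < x) Finset.univ).Nonempty
  · obtain ⟨j0, hj0mem, hj0max⟩ :
        ∃ j0 ∈ Finset.filter (fun j : Fin p => s i j < x) Finset.univ,
          ∀ b ∈ Finset.filter (fun j : Fin p => s i j < x) Finset.univ, b ≤ j0 :=
      ⟨_, Finset.max'_mem _ hFn, fun b hb => Finset.le_max' _ b hb⟩
    have hj0m : s i j0 < x := (Finset.mem_filter.mp hj0mem).2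
    have hj0lt : (j0:ℕ) < p := j0.isLt
    refine ⟨⟨(j0:ℕ)+1, by omega⟩, ?_, ?_⟩
    · rw [dif_neg (by simp)]
      exact EReal.coe_lt_coe_iff.mpr hj0m
    · by_cases hp : (j0:ℕ)+1 = p
      · rw [dif_pos hp]; exact hx.2
      · rw [dif_neg hp]
        have hnot : ¬ s i ⟨(j0:ℕ)+1, by omega⟩ < x := by
          intro hlt
          have hmem : (⟨(j0:ℕ)+1, by omega⟩ : Fin p) ∈
              Finset.filter (fun j : Fin p => s i j < x) Finset.univ :=
            Finset.mem_filter.mpr ⟨Finset.mem_univ _, hlt⟩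
          have hle := hj0max _ hmem
          rw [Fin.le_def] at hle
          simp at hle
        exact EReal.coe_lt_coe_iff.mpr
          (lt_of_le_of_ne (not_lt.mp hnot) (hxs ⟨(j0:ℕ)+1, by omega⟩))
  · refine ⟨⟨0, by omega⟩, ?_, ?_⟩
    · rw [dif_pos rfl]; exact hx.1
    · by_cases hp : (0:ℕ) = p
      · rw [dif_pos hp]; exact hx.2
      · rw [dif_neg hp]
        have hnot : ¬ s i ⟨0, by omega⟩ < x := by
          intro hlt
          exact hFn ⟨⟨0, by omega⟩, Finset.mem_filter.mpr ⟨Finset.mem_univ _, hlt⟩⟩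
        exact EReal.coe_lt_coe_iff.mpr
          (lt_of_le_of_ne (not_lt.mp hnot) (hxs ⟨0, by omega⟩))

lemma sep_point_subPieces (hs_mono : ∀ i, StrictMono (s i)) {i : Fin k}
    {j j' : Fin (p+1)} (hjp : (j:ℕ) < p) (hjj : (j:ℕ) < (j':ℕ)) {x y : ℝ}
    (hx : x ∈ subPiece N t α s i j) (hy : y ∈ subPiece N t α s i j') :
    x < s i ⟨(j:ℕ), hjp⟩ ∧ s i ⟨(j:ℕ), hjp⟩ < y := by
  obtain ⟨_, hx2⟩ := hx
  obtain ⟨hy1, _⟩ := hy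
  rw [dif_neg (by omega)] at hx2
  rw [dif_neg (by omega)] at hy1
  constructor
  · exact EReal.coe_lt_coe_iff.mp hx2
  · refine lt_of_le_of_lt ?_ (EReal.coe_lt_coe_iff.mp hy1)
    exact (hs_mono i).monotone (by simp only [Fin.le_def]; omega)

lemma mem_subPiece_of_btwn {i : Fin k} {j : Fin (p+1)} {x y u : ℝ}
    (hx : x ∈ subPiece N t α s i j) (hy : y ∈ subPiece N t α s i j)
    (h1 : min x y ≤ u) (h2 : u ≤ max x y) : u ∈ subPiece N t α s i j := by
  rcases le_total x y with hxy | hxy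
  · rw [min_eq_left hxy] at h1
    rw [max_eq_right hxy] at h2
    exact ⟨lt_of_lt_of_le hx.1 (EReal.coe_le_coe_iff.mpr h1),
      lt_of_le_of_lt (EReal.coe_le_coe_iff.mpr h2) hy.2⟩
  · rw [min_eq_right hxy] at h1
    rw [max_eq_left hxy] at h2
    exact ⟨lt_of_lt_of_le hy.1 (EReal.coe_le_coe_iff.mpr h1),
      lt_of_le_of_lt (EReal.coe_le_coe_iff.mpr h2) hx.2⟩

lemma rel_map {T : Set ℝ} {f : ℝ → ℝ} (hinv : AlgInvariant (pcAlgOn T) f) {x y : ℝ}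
    (h : Rel T x y) : Rel T (f x) (f y) :=
  fun g hg => h _ (hinv g hg)

lemma rel_pow {T : Set ℝ} (hinv : AlgInvariant (pcAlgOn T) σ) (m : ℕ) :
    ∀ {x y : ℝ}, Rel T x y → Rel T ((σ^m) x) ((σ^m) y) := by
  induction m with
  | zero => intro x y h; simpa using h
  | succ n ih =>
    intro x y h
    have h2 := ih (rel_map hinv h)
    rw [pow_succ]
    simpa using h2

lemma symm_pow_apply (σ : Equiv.Perm ℝ) (m : ℕ) (x : ℝ) :
    (σ.symm ^ m) ((σ ^ m) x) = x := by
  rw [show σ.symm = σ⁻¹ from rfl, inv_pow]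
  exact Equiv.symm_apply_apply _ _

lemma rel_pow_cancel {T : Set ℝ} (hinv : AlgInvariant (pcAlgOn T) σ.symm) (m : ℕ)
    {x y : ℝ} (h : Rel T ((σ^m) x) ((σ^m) y)) : Rel T x y := by
  have h2 := rel_pow (σ := σ.symm) hinv m h
  rwa [symm_pow_apply, symm_pow_apply] at h2

lemma subPiece_not_mem_T (ht : StrictMono t) (hαinj : Function.Injective α)
    (hs_mem : ∀ i j, s i j ∈ openPiece N t (α i)) (hs_mono : ∀ i, StrictMono (s i))
    {i : Fin k} {j : Fin (p+1)} {u : ℝ} (hu : u ∈ subPiece N t α s i j) :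
    u ∉ (Set.range t ∪ ⋃ i, Set.range (s i)) := by
  intro hT
  have huI : u ∈ openPiece N t (α i) := subPiece_subset_openPiece hs_mem i j hu
  rcases hT with ⟨m, rfl⟩ | hs
  · exact t_not_mem_openPiece ht m huI
  · simp only [Set.mem_iUnion, Set.mem_range] at hs
    obtain ⟨i', j', rfl⟩ := hs
    by_cases hii : i' = i
    · subst hii
      exact s_not_mem_subPiece hs_mono i' j' j hu
    · exact openPiece_disjoint ht (fun he => hii (hαinj he)) (hs_mem i' j') huI

lemma rel_of_mem_subPiece (ht : StrictMono t) (hαinj : Function.Injective α)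
    (hs_mem : ∀ i j, s i j ∈ openPiece N t (α i)) (hs_mono : ∀ i, StrictMono (s i))
    {i : Fin k} {j : Fin (p+1)} {x y : ℝ} (hx : x ∈ subPiece N t α s i j)
    (hy : y ∈ subPiece N t α s i j) :
    Rel (Set.range t ∪ ⋃ i, Set.range (s i)) x y := by
  intro h hh
  apply hh x y (subPiece_not_mem_T ht hαinj hs_mem hs_mono hx)
    (subPiece_not_mem_T ht hαinj hs_mem hs_mono hy)
  intro u hu hmem
  exact subPiece_not_mem_T ht hαinj hs_mem hs_mono
    (mem_subPiece_of_btwn hx hy hmem.1 hmem.2) hu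

lemma exists_ne_mem_subPiece {i : Fin k} {j : Fin (p+1)} {x : ℝ}
    (hx : x ∈ subPiece N t α s i j) :
    ∃ x', x' ∈ subPiece N t α s i j ∧ x' ≠ x := by
  obtain ⟨h1, h2⟩ := hx
  obtain ⟨x', hne, hgt, hlt⟩ := exists_real_btwn_lt _ h1
  exact ⟨x', ⟨hgt, lt_trans (EReal.coe_lt_coe_iff.mpr hlt) h2⟩, hne⟩

lemma image_not_mem_T (ht : StrictMono t) (hαinj : Function.Injective α)
    (hs_mem : ∀ i j, s i j ∈ openPiece N t (α i)) (hs_mono : ∀ i, StrictMono (s i))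
    (hinv : AlgInvariant (pcAlgOn (Set.range t ∪ ⋃ i, Set.range (s i))) σ)
    {i : Fin k} {j : Fin (p+1)} {x : ℝ} (hx : x ∈ subPiece N t α s i j) (M : ℕ) :
    (σ^M) x ∉ (Set.range t ∪ ⋃ i, Set.range (s i)) := by
  intro hT
  obtain ⟨x', hx', hne⟩ := exists_ne_mem_subPiece hx
  have hrel : Rel _ x x' := rel_of_mem_subPiece ht hαinj hs_mem hs_mono hx hx'
  have hrel2 := rel_pow hinv M hrel
  have hne2 : (σ^M) x' ≠ (σ^M) x := fun he => hne ((σ^M).injective he)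
  exact not_rel_of_singleton hT hne2 hrel2

lemma preimage_not_mem_subPiece (ht : StrictMono t) (hαinj : Function.Injective α)
    (hs_mem : ∀ i j, s i j ∈ openPiece N t (α i)) (hs_mono : ∀ i, StrictMono (s i))
    (hinv : AlgInvariant (pcAlgOn (Set.range t ∪ ⋃ i, Set.range (s i))) σ.symm)
    {i : Fin k} {j : Fin (p+1)} {x : ℝ}
    (hxT : x ∈ (Set.range t ∪ ⋃ i, Set.range (s i))) (M : ℕ)
    (hy : (σ^M) x ∈ subPiece N t α s i j) : False := by
  obtain ⟨y', hy', hne⟩ := exists_ne_mem_subPiece hy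
  set z := ((σ^M)⁻¹ : Equiv.Perm ℝ) y' with hz
  have hzy : (σ^M) z = y' := Equiv.apply_symm_apply _ _
  have hrel : Rel (Set.range t ∪ ⋃ i, Set.range (s i)) ((σ^M) x) ((σ^M) z) := by
    rw [hzy]
    exact rel_of_mem_subPiece ht hαinj hs_mem hs_mono hy hy'
  have hrel2 := rel_pow_cancel hinv M hrel
  have hnez : z ≠ x := by
    intro he
    exact hne (by rw [← hzy, he])
  exact not_rel_of_singleton hxT hnez hrel2

lemma mem_subPiece_of_rel (ht : StrictMono t) (hαinj : Function.Injective α)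
    (hs_mem : ∀ i j, s i j ∈ openPiece N t (α i)) (hs_mono : ∀ i, StrictMono (s i))
    {i : Fin k} {j : Fin (p+1)} {x y : ℝ} (hx : x ∈ subPiece N t α s i j)
    (hyI : y ∈ openPiece N t (α i))
    (hyT : y ∉ (Set.range t ∪ ⋃ i, Set.range (s i)))
    (hrel : Rel (Set.range t ∪ ⋃ i, Set.range (s i)) x y) :
    y ∈ subPiece N t α s i j := by
  rcases exists_mem_subPiece hs_mono hyI with ⟨j'', he⟩ | ⟨j'', hy⟩
  · exact absurd (Or.inr (Set.mem_iUnion.mpr ⟨i, show y ∈ Set.range (s i) from ⟨j'', he.symm⟩⟩)) hyT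
  rcases lt_trichotomy (j:ℕ) (j'':ℕ) with h | h | h
  · have hjp : (j:ℕ) < p := by have := j''.isLt; omega
    obtain ⟨h1, h2⟩ := sep_point_subPieces hs_mono hjp h hx hy
    exact absurd hrel (not_rel_of_btwn (Or.inr (Set.mem_iUnion.mpr ⟨i, Set.mem_range_self _⟩)) h1 h2)
  · have : j = j'' := Fin.ext h
    rwa [this]
  · have hjp : (j'':ℕ) < p := by have := j.isLt; omega
    obtain ⟨h1, h2⟩ := sep_point_subPieces hs_mono hjp h hy hx
    exact absurd hrel.symm
      (not_rel_of_btwn (Or.inr (Set.mem_iUnion.mpr ⟨i, Set.mem_range_self _⟩)) h1 h2)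

lemma image_pow_openPiece (hk : 0 < k)
    (hcyc : ∀ i : Fin k, ∃ i' : Fin k, ((i' : ℕ) = ((i : ℕ) + 1) % k) ∧
      σ '' openPiece N t (α i) = openPiece N t (α i')) :
    ∀ (m : ℕ) (i : Fin k), ∃ i'' : Fin k, ((i'':ℕ) = ((i:ℕ) + m) % k) ∧
      (σ^m) '' openPiece N t (α i) = openPiece N t (α i'') := by
  intro m
  induction m with
  | zero =>
    intro i
    refine ⟨i, by rw [Nat.add_zero, Nat.mod_eq_of_lt i.isLt], ?_⟩
    simp
  | succ n ih =>
    intro i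
    obtain ⟨i1, hi1, him1⟩ := hcyc i
    obtain ⟨i'', hi'', him⟩ := ih i1
    refine ⟨i'', ?_, ?_⟩
    · rw [hi'', hi1, Nat.mod_add_mod]
      congr 1
      omega
    · rw [pow_succ]
      have : ⇑(σ^n * σ) = ⇑(σ^n) ∘ ⇑σ := by
        ext z; simp
      rw [this, Set.image_comp, him1, him]

lemma dvd_of_return (ht : StrictMono t) (hk : 0 < k) (hαinj : Function.Injective α)
    (hcyc : ∀ i : Fin k, ∃ i' : Fin k, ((i' : ℕ) = ((i : ℕ) + 1) % k) ∧
      σ '' openPiece N t (α i) = openPiece N t (α i'))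
    {x : ℝ} {m : ℕ} {i : Fin k} (hx : x ∈ openPiece N t (α i))
    (hx2 : (σ^m) x ∈ openPiece N t (α i)) : k ∣ m := by
  obtain ⟨i'', hval, him⟩ := image_pow_openPiece hk hcyc m i
  have hmem : (σ^m) x ∈ openPiece N t (α i'') := him ▸ Set.mem_image_of_mem _ hx
  have hii : i'' = i := by
    by_contra hne
    exact openPiece_disjoint ht (fun he => hne (hαinj he)) hmem hx2
  rw [hii] at hval
  have : ((i:ℕ) + m) % k = (i:ℕ) % k := by rw [← hval, Nat.mod_eq_of_lt i.isLt]
  have hmod : (i:ℕ) ≡ (i:ℕ) + m [MOD k] := this.symm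
  have := (Nat.modEq_iff_dvd' (Nat.le_add_right _ _)).mp hmod
  simpa using this

lemma return_mem (hk : 0 < k)
    (hcyc : ∀ i : Fin k, ∃ i' : Fin k, ((i' : ℕ) = ((i : ℕ) + 1) % k) ∧
      σ '' openPiece N t (α i) = openPiece N t (α i'))
    {x : ℝ} {i : Fin k} (hx : x ∈ openPiece N t (α i)) (m : ℕ) :
    (σ^(k*m)) x ∈ openPiece N t (α i) := by
  obtain ⟨i'', hval, him⟩ := image_pow_openPiece hk hcyc (k*m) i
  have hii : i'' = i := by
    apply Fin.ext
    rw [hval, Nat.mul_comm, Nat.add_mul_mod_self_right, Nat.mod_eq_of_lt i.isLt]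
  rw [hii] at him
  exact him ▸ Set.mem_image_of_mem _ hx

lemma pigeonhole_nat (q : ℕ) (g : ℕ → Fin q) :
    ∃ u v : ℕ, u < v ∧ v ≤ q ∧ g u = g v := by
  obtain ⟨m1, m2, hne, he⟩ :=
    Fintype.exists_ne_map_eq_of_card_lt (fun m : Fin (q+1) => g (m:ℕ)) (by simp)
  rcases hne.lt_or_gt with h | h
  · exact ⟨(m1:ℕ), (m2:ℕ), h, by have := m2.isLt; omega, he⟩
  · exact ⟨(m2:ℕ), (m1:ℕ), h, by have := m1.isLt; omega, he.symm⟩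

end Statement9Aux

/-- in the cyclic setup, if `C_k` consists of the intervals
`I_{α 0}, …, I_{α (k-1)}`, then `C_k = ⋃_{l=1}^{p+1} C̃_{k·l}`. -/
theorem statement9 (N : ℕ) (t : Fin N → ℝ) (ht : StrictMono t)
    (σ : Equiv.Perm ℝ) (k p : ℕ) (α : Fin k → ℕ) (s : Fin k → Fin p → ℝ)
    (hsetup : CyclicSetup N t σ α s)
    (hCeq : Ck N t σ k = ⋃ i, openPiece N t (α i)) :
    Ck N t σ k = ⋃ (l : ℕ) (_ : 1 ≤ l ∧ l ≤ p + 1), Ctil N t σ α s (k * l) := by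
  obtain ⟨hk, hαN, hαinj, hs_mem, hs_mono, hcyc, hsub, hA1, hA2, hAS1, hAS2⟩ := hsetup
  rw [hCeq]
  apply Set.Subset.antisymm
  · intro x hx
    obtain ⟨i, hxi⟩ := Set.mem_iUnion.mp hx
    -- the return-time set
    set S : Set ℕ :=
      {j : ℕ | 0 < j ∧ ∃ P ∈ cyclePieces N t α s, x ∈ P ∧ (σ ^ j) x ∈ P} with hSdef
    -- every return time is a multiple of k
    have key1 : ∀ m ∈ S, k ∣ m := by
      rintro m ⟨hm0, P, hP, hxP, hσP⟩
      rcases hP with ⟨i', j', rfl⟩ | ⟨i', j', rfl⟩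
      · have hPsub := subPiece_subset_openPiece (s := s) hs_mem i' j'
        have hii : α i' = α i := by
          by_contra hne
          exact openPiece_disjoint ht hne (hPsub hxP) hxi
        have h1 : x ∈ openPiece N t (α i) := hxi
        have h2 : (σ^m) x ∈ openPiece N t (α i) := hii ▸ hPsub hσP
        exact dvd_of_return ht hk hαinj hcyc h1 h2
      · have hxeq : x = s i' j' := hxP
        have hii : α i' = α i := by
          by_contra hne
          exact openPiece_disjoint ht hne (hxeq ▸ hs_mem i' j') hxi
        have h2 : (σ^m) x ∈ openPiece N t (α i) := by
          have : (σ^m) x = x := by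
            have h3 : (σ^m) x = s i' j' := hσP
            rw [h3, ← hxeq]
          rw [this]; exact hxi
        exact dvd_of_return ht hk hαinj hcyc hxi h2
    -- there is some return time k*l with 1 ≤ l ≤ p+1
    have key2 : ∃ l : ℕ, 1 ≤ l ∧ l ≤ p + 1 ∧ k * l ∈ S := by
      by_cases hxs : ∃ j0 : Fin p, x = s i j0
      · -- x is one of the added jump points
        obtain ⟨j0, hxeq⟩ := hxs
        have hxT : x ∈ (Set.range t ∪ ⋃ i, Set.range (s i)) :=
          Or.inr (Set.mem_iUnion.mpr ⟨i, ⟨j0, hxeq.symm⟩⟩)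
        have key : ∀ m : ℕ, ∃ j' : Fin p, (σ^(k*m)) x = s i j' := by
          intro m
          have hmem : (σ^(k*m)) x ∈ openPiece N t (α i) := return_mem hk hcyc hxi m
          rcases exists_mem_subPiece hs_mono hmem with ⟨j', he⟩ | ⟨j', hin⟩
          · exact ⟨j', he⟩
          · exact absurd hin (fun hin =>
              preimage_not_mem_subPiece ht hαinj hs_mem hs_mono hAS2 hxT (k*m) hin)
        choose g hg using key
        obtain ⟨u, v, huv, hvle, hgl⟩ := pigeonhole_nat p g
        have he1 : (σ^(k*u)) x = (σ^(k*v)) x := by rw [hg u, hg v, hgl]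
        have he2 : (σ^(k*(v-u))) x = x := by
          apply (σ^(k*u)).injective
          rw [← Equiv.Perm.mul_apply, ← pow_add]
          rw [show k*u + k*(v-u) = k*v by rw [← Nat.mul_add]; congr 1; omega]
          exact he1.symm
        refine ⟨v - u, by omega, by omega, ?_⟩
        refine ⟨Nat.mul_pos hk (by omega), {s i j0}, Or.inr ⟨i, j0, rfl⟩, ?_, ?_⟩
        · exact hxeq
        · rw [he2]; exact hxeq
      · -- x lies in one of the open subintervals
        push_neg at hxs
        obtain ⟨j, hxj⟩ : ∃ j, x ∈ subPiece N t α s i j := by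
          rcases exists_mem_subPiece hs_mono hxi with ⟨j0, he⟩ | h
          · exact absurd he (hxs j0)
          · exact h
        have key : ∀ m : ℕ, ∃ j' : Fin (p+1), (σ^(k*m)) x ∈ subPiece N t α s i j' := by
          intro m
          have hmem : (σ^(k*m)) x ∈ openPiece N t (α i) := return_mem hk hcyc hxi m
          rcases exists_mem_subPiece hs_mono hmem with ⟨j', he⟩ | h
          · exact absurd (show (σ^(k*m)) x ∈ (Set.range t ∪ ⋃ i, Set.range (s i)) from
              Or.inr (Set.mem_iUnion.mpr ⟨i, ⟨j', he.symm⟩⟩))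
              (image_not_mem_T ht hαinj hs_mem hs_mono hAS1 hxj (k*m))
          · exact h
        choose g hg using key
        obtain ⟨u, v, huv, hvle, hgl⟩ := pigeonhole_nat (p+1) g
        have he1 : Rel (Set.range t ∪ ⋃ i, Set.range (s i)) ((σ^(k*u)) x) ((σ^(k*v)) x) :=
          rel_of_mem_subPiece ht hαinj hs_mem hs_mono (hg u) (hgl ▸ hg v)
        have heq : (σ^(k*u)) ((σ^(k*(v-u))) x) = (σ^(k*v)) x := by
          rw [← Equiv.Perm.mul_apply, ← pow_add]
          rw [show k*u + k*(v-u) = k*v by rw [← Nat.mul_add]; congr 1; omega]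
        have he2 : Rel (Set.range t ∪ ⋃ i, Set.range (s i)) x ((σ^(k*(v-u))) x) := by
          apply rel_pow_cancel hAS2 (k*u)
          rw [heq]
          exact he1
        have hin : (σ^(k*(v-u))) x ∈ subPiece N t α s i j :=
          mem_subPiece_of_rel ht hαinj hs_mem hs_mono hxj
            (return_mem hk hcyc hxi (v-u))
            (image_not_mem_T ht hαinj hs_mem hs_mono hAS1 hxj (k*(v-u))) he2
        refine ⟨v - u, by omega, by omega, ?_⟩
        exact ⟨Nat.mul_pos hk (by omega), subPiece N t α s i j,
          Or.inl ⟨i, j, rfl⟩, hxj, hin⟩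
    obtain ⟨l, hl1, hlp, hS⟩ := key2
    have hSne : S.Nonempty := ⟨_, hS⟩
    have hleast : IsLeast S (sInf S) := ⟨Nat.sInf_mem hSne, fun b hb => Nat.sInf_le hb⟩
    obtain ⟨l', hl'⟩ := key1 _ (Nat.sInf_mem hSne)
    have hl'0 : 1 ≤ l' := by
      rcases Nat.eq_zero_or_pos l' with rfl | h
      · exfalso
        have h0 := (Nat.sInf_mem hSne).1
        omega
      · exact h
    have hl'le : l' ≤ p + 1 := by
      have hle : sInf S ≤ k * l := Nat.sInf_le hS
      rw [hl'] at hle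
      have : k * l' ≤ k * (p+1) := le_trans hle (Nat.mul_le_mul_left k hlp)
      exact Nat.le_of_mul_le_mul_left this hk
    refine Set.mem_iUnion.mpr ⟨l', Set.mem_iUnion.mpr ⟨⟨hl'0, hl'le⟩, ?_⟩⟩
    refine ⟨Set.mem_iUnion.mpr ⟨i, hxi⟩, ?_⟩
    rw [← hl']
    exact hleast
  · intro x hx
    simp only [Set.mem_iUnion] at hx
    obtain ⟨l, hl, hx⟩ := hx
    exact hx.1

end PaperTRS
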